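/- Let e₁, e₂ ∈ ℝ² be linearly independent, e₃ = −e₁ − e₂, and let 𝓜 be a real symmetric positive definite 2 × 2 matrix with eₖᵀ 𝓜 eₖ = 3 for k = 1, 2, 3. Then the Euclidean area of the triangle spanned by these edges satisfies |K| = (1/2)|det(e₁, e₂)| = (3√3/4) · (det 𝓜)^{-1/2}. Equivalently, with eigenvalues 1/h₁², 1/h₂² of 𝓜, one has |K| = (3√3/4) h₁ h₂. -/

import Mathlib

open Matrix

/-- A triangle that is unit (with constant `C = 3`) with respect to a symmetric
positive definite metric tensor `𝓜` has Euclidean area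
`|K| = (1/2)|det(e₁,e₂)| = (3√3/4) (det 𝓜)^(−1/2)`; equivalently, with eigenvalues
`1/h₁², 1/h₂²` of `𝓜` (so `det 𝓜 = 1/(h₁² h₂²)`), `|K| = (3√3/4) h₁ h₂`. -/
theorem unit_triangle_area_metric
    (e₁ e₂ : Fin 2 → ℝ) (hind : LinearIndependent ℝ ![e₁, e₂])
    (e₃ : Fin 2 → ℝ) (he₃ : e₃ = -e₁ - e₂)
    (𝓜 : Matrix (Fin 2) (Fin 2) ℝ) (hsymm : 𝓜.IsSymm) (hpd : 𝓜.PosDef)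
    (h₁' : e₁ ⬝ᵥ (𝓜 *ᵥ e₁) = 3) (h₂' : e₂ ⬝ᵥ (𝓜 *ᵥ e₂) = 3)
    (h₃' : e₃ ⬝ᵥ (𝓜 *ᵥ e₃) = 3) :
    (1 / 2) * |e₁ 0 * e₂ 1 - e₁ 1 * e₂ 0| =
        (3 * Real.sqrt 3 / 4) * (𝓜.det) ^ (-(1 : ℝ) / 2) ∧
      ∀ h₁ h₂ : ℝ, 0 < h₁ → 0 < h₂ → 𝓜.det = 1 / (h₁ ^ 2 * h₂ ^ 2) →
        (1 / 2) * |e₁ 0 * e₂ 1 - e₁ 1 * e₂ 0| = (3 * Real.sqrt 3 / 4) * (h₁ * h₂) := by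
  subst he₃
  have hs : 𝓜 1 0 = 𝓜 0 1 := by
    have := hsymm.apply 1 0
    simpa using this.symm
  have hdet : 𝓜.det = 𝓜 0 0 * 𝓜 1 1 - 𝓜 0 1 * 𝓜 1 0 := Matrix.det_fin_two 𝓜
  have hdetpos : 0 < 𝓜.det := hpd.det_pos
  simp only [dotProduct, mulVec, Fin.sum_univ_two, Pi.sub_apply, Pi.neg_apply,
    dotProduct, Fin.isValue] at h₁' h₂' h₃'
  rw [hs] at h₁' h₂' h₃'
  -- the mixed product e₁ᵀ 𝓜 e₂
  have ht : 𝓜 0 0 * (e₁ 0 * e₂ 0) + 𝓜 0 1 * (e₁ 0 * e₂ 1 + e₁ 1 * e₂ 0)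
      + 𝓜 1 1 * (e₁ 1 * e₂ 1) = -3 / 2 := by
    linear_combination (h₃' - h₁' - h₂') / 2
  -- key algebraic identity
  have key : (e₁ 0 * e₂ 1 - e₁ 1 * e₂ 0) ^ 2 * 𝓜.det = 27 / 4 := by
    rw [hdet, hs]
    linear_combination
      (e₂ 0 * (𝓜 0 0 * e₂ 0 + 𝓜 0 1 * e₂ 1) + e₂ 1 * (𝓜 0 1 * e₂ 0 + 𝓜 1 1 * e₂ 1)) * h₁'
      + 3 * h₂'
      + (3 / 2 - (𝓜 0 0 * (e₁ 0 * e₂ 0) + 𝓜 0 1 * (e₁ 0 * e₂ 1 + e₁ 1 * e₂ 0)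
          + 𝓜 1 1 * (e₁ 1 * e₂ 1))) * ht
  have hsqrtdet : 0 < Real.sqrt 𝓜.det := Real.sqrt_pos.mpr hdetpos
  have sqrt27 : Real.sqrt (27 / 4) = 3 * Real.sqrt 3 / 2 := by
    rw [show (27 / 4 : ℝ) = (3 / 2) ^ 2 * 3 by norm_num,
      Real.sqrt_mul (by positivity), Real.sqrt_sq (by norm_num)]
    ring
  have habs : |e₁ 0 * e₂ 1 - e₁ 1 * e₂ 0| * Real.sqrt 𝓜.det = 3 * Real.sqrt 3 / 2 := by
    rw [← Real.sqrt_sq_eq_abs, ← Real.sqrt_mul (sq_nonneg _), key, sqrt27]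
  constructor
  · have hrpow : 𝓜.det ^ (-(1 : ℝ) / 2) = (Real.sqrt 𝓜.det)⁻¹ := by
      rw [neg_div, Real.rpow_neg hdetpos.le, Real.sqrt_eq_rpow]
    rw [hrpow]
    field_simp
    linarith [habs]
  · intro h₁ h₂ hh₁ hh₂ hEq
    have hsq : Real.sqrt 𝓜.det = (h₁ * h₂)⁻¹ := by
      rw [hEq, show (1 / (h₁ ^ 2 * h₂ ^ 2) : ℝ) = ((h₁ * h₂)⁻¹) ^ 2 by
        field_simp, Real.sqrt_sq (by positivity)]
    rw [hsq] at habs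
    have hpos : 0 < h₁ * h₂ := mul_pos hh₁ hh₂
    field_simp at habs ⊢
    linarith [habs]
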